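/- Let I be a finite nonempty index set and let q, t : I → ℝ be probability mass functions (q i ≥ 0, t i ≥ 0 for all i, and Σ_{i∈I} q i = Σ_{i∈I} t i = 1). Define Sp(β) = Σ_{i∈I} max(0, β·q i − t i) for β ∈ ℝ, let β* be the unique real number with Sp(β*) = 1, and define p* : I → ℝ by p* i = max(0, β*·q i − t i). Define F(p) = Σ_{i∈I} (t i + p i)·log(t i + p i) − Σ_{i∈I} (t i + p i + q i)·log(t i + p i + q i), with the convention 0·log 0 = 0. Then p* i ≥ 0 for all i, Σ_{i∈I} p* i = 1, and for every p : I → ℝ with p i ≥ 0 for all i and Σ_{i∈I} p i = 1, one has F(p*) ≤ F(p). That is, p* minimizes F over all probability mass functions on I. -/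
import Mathlib


open Real Finset


private lemma log_diff_le (a b : ℝ) (ha : 0 < a) (hb : 0 < b) :
    Real.log a - Real.log b ≤ a / b - 1 := by
  have h := Real.log_le_sub_one_of_pos (show (0:ℝ) < a / b by positivity)
  rwa [Real.log_div ha.ne' hb.ne'] at h

/-- Convexity/subgradient inequality for `g(z) = z log z - (z+q) log (z+q)` at `y > 0`. -/
private lemma convex_ineq (q x y : ℝ) (hq : 0 ≤ q) (hx : 0 ≤ x) (hy : 0 < y) :
    (Real.log y - Real.log (y + q)) * (x - y) ≤
      (x * Real.log x - (x + q) * Real.log (x + q)) -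
        (y * Real.log y - (y + q) * Real.log (y + q)) := by
  rcases eq_or_lt_of_le hq with hq0 | hqpos
  · subst hq0
    simp only [add_zero]
    nlinarith [sq_nonneg (x - y)]
  rcases eq_or_lt_of_le hx with hx0 | hxpos
  · subst hx0
    have h1 : Real.log q ≤ Real.log (y + q) :=
      Real.log_le_log hqpos (by linarith)
    simp only [Real.log_zero, zero_add, zero_mul]
    nlinarith
  · have hyq : 0 < y + q := by linarith
    have hxq : 0 < x + q := by linarith
    have F1 : Real.log (x + q) - Real.log (y + q) ≤ (x + q) / (y + q) - 1 :=
      log_diff_le _ _ hxq hyq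
    have F2 : Real.log (y * (x + q)) - Real.log (x * (y + q)) ≤
        (y * (x + q)) / (x * (y + q)) - 1 :=
      log_diff_le _ _ (by positivity) (by positivity)
    rw [Real.log_mul hy.ne' hxq.ne', Real.log_mul hxpos.ne' hyq.ne'] at F2
    have e1 : (x + q) / (y + q) * (y + q) = x + q := by field_simp
    have e2 : (y * (x + q)) / (x * (y + q)) * (x * (y + q)) = y * (x + q) := by
      field_simp
    nlinarith [mul_le_mul_of_nonneg_left F1 hqpos.le,
      mul_le_mul_of_nonneg_left F2 hxpos.le,
      mul_pos hxpos hyq,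
      mul_le_mul_of_nonneg_right F1 hyq.le,
      mul_le_mul_of_nonneg_right F2 (mul_pos hxpos hyq).le]

/-- Main claim of Theorem 1 (discrete form): with `β*` the unique real satisfying
`Σ max(0, β*·q i − t i) = 1`, the function `p* i = max(0, β*·q i − t i)` is a
probability mass function and minimizes
`F(p) = Σ (t i + p i)·log (t i + p i) − Σ (t i + p i + q i)·log (t i + p i + q i)`
(with the convention `0·log 0 = 0`, realized by `Real.log 0 = 0`) over all
probability mass functions `p` on `I`. -/
theorem optimal_generator {I : Type*} [Fintype I] [Nonempty I]
    (q t : I → ℝ) (hq : ∀ i, 0 ≤ q i) (ht : ∀ i, 0 ≤ t i)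
    (hqs : ∑ i, q i = 1) (hts : ∑ i, t i = 1)
    (Sp : ℝ → ℝ) (hSp : ∀ β : ℝ, Sp β = ∑ i, max 0 (β * q i - t i))
    (βstar : ℝ) (hβ : Sp βstar = 1)
    (pstar : I → ℝ) (hpstar : ∀ i, pstar i = max 0 (βstar * q i - t i))
    (F : (I → ℝ) → ℝ)
    (hF : ∀ p : I → ℝ, F p =
      (∑ i, (t i + p i) * Real.log (t i + p i)) -
        ∑ i, (t i + p i + q i) * Real.log (t i + p i + q i)) :
    (∀ i, 0 ≤ pstar i) ∧ (∑ i, pstar i = 1) ∧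
      ∀ p : I → ℝ, (∀ i, 0 ≤ p i) → (∑ i, p i = 1) → F pstar ≤ F p := by
  have hp0 : ∀ i, 0 ≤ pstar i := fun i => (hpstar i) ▸ le_max_left _ _
  have hps : ∑ i, pstar i = 1 := by
    rw [← hβ, hSp]
    exact Finset.sum_congr rfl fun i _ => hpstar i
  -- βstar > 0
  have hβpos : 0 < βstar := by
    by_contra h
    push_neg at h
    have hz : Sp βstar = 0 := by
      rw [hSp]
      refine Finset.sum_eq_zero fun i _ => ?_
      have : βstar * q i - t i ≤ 0 := by nlinarith [hq i, ht i]
      exact max_eq_left this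
    rw [hz] at hβ; norm_num at hβ
  refine ⟨hp0, hps, ?_⟩
  intro p hp hsum
  set c : ℝ := Real.log βstar - Real.log (βstar + 1) with hc_def
  have hc : c ≤ 0 := sub_nonpos.2 (Real.log_le_log hβpos (by linarith))
  have key : ∀ i,
      c * ((t i + p i) - (t i + pstar i)) ≤
        ((t i + p i) * Real.log (t i + p i)
          - (t i + p i + q i) * Real.log (t i + p i + q i)) -
        ((t i + pstar i) * Real.log (t i + pstar i)
          - (t i + pstar i + q i) * Real.log (t i + pstar i + q i)) := by
    intro i
    have hqi := hq i; have hti := ht i; have hpi := hp i; have hpsi := hp0 i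
    rcases eq_or_lt_of_le hqi with hq0 | hqpos
    · -- q i = 0 : the term function is identically 0
      have hps0 : pstar i = 0 := by
        rw [hpstar i]
        exact max_eq_left (by nlinarith)
      rw [hps0, ← hq0]
      simp only [add_zero]
      nlinarith
    · rcases le_or_gt (βstar * q i) (t i) with hle | hlt
      · -- pstar i = 0, y = t i > 0
        have hps0 : pstar i = 0 := by
          rw [hpstar i]; exact max_eq_left (by linarith)
        have hty : 0 < t i := lt_of_lt_of_le (by positivity) hle
        have hslope : c ≤ Real.log (t i) - Real.log (t i + q i) := by
          have h1 : βstar * (t i + q i) ≤ (βstar + 1) * t i := by nlinarith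
          have h2 : Real.log (βstar * (t i + q i)) ≤ Real.log ((βstar + 1) * t i) :=
            Real.log_le_log (by positivity) h1
          rw [Real.log_mul hβpos.ne' (by positivity),
            Real.log_mul (by positivity) hty.ne'] at h2
          rw [hc_def]; linarith
        have hconv := convex_ineq (q i) (t i + p i) (t i) hqi (by linarith) hty
        have hmono : c * (t i + p i - t i) ≤
            (Real.log (t i) - Real.log (t i + q i)) * (t i + p i - t i) := by
          apply mul_le_mul_of_nonneg_right hslope (by linarith)
        rw [hps0]
        simp only [add_zero] at *
        linarith
      · -- pstar i = βstar * q i - t i, y = βstar * q i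
        have hpsi' : pstar i = βstar * q i - t i := by
          rw [hpstar i]; exact max_eq_right (by linarith)
        have hy : 0 < βstar * q i := by positivity
        have hslope : Real.log (βstar * q i) - Real.log (βstar * q i + q i) = c := by
          have e : βstar * q i + q i = (βstar + 1) * q i := by ring
          rw [e, Real.log_mul hβpos.ne' hqpos.ne',
            Real.log_mul (by positivity) hqpos.ne', hc_def]
          ring
        have hconv := convex_ineq (q i) (t i + p i) (βstar * q i) hqi (by linarith) hy
        rw [hslope] at hconv
        have e1 : t i + pstar i = βstar * q i := by rw [hpsi']; ring
        rw [e1]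
        linarith
  have hsumkey := Finset.sum_le_sum (s := Finset.univ) (fun i _ => key i)
  have hL : ∑ i, c * ((t i + p i) - (t i + pstar i)) = 0 := by
    rw [← Finset.mul_sum]
    have : ∑ i, ((t i + p i) - (t i + pstar i)) = 0 := by
      rw [Finset.sum_sub_distrib, Finset.sum_add_distrib, Finset.sum_add_distrib,
        hsum, hps]; ring
    rw [this, mul_zero]
  rw [hL] at hsumkey
  rw [hF p, hF pstar]
  rw [Finset.sum_sub_distrib] at hsumkey
  rw [Finset.sum_sub_distrib, Finset.sum_sub_distrib] at hsumkey
  linarith
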